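/- arXiv:2407.04037 — 3 statements merged into one kernel-verified Lean document; each statement's English description precedes it below -/
import Mathlib

section
/- Let G be an undirected graph, let H be a 'global gadget' graph disjoint from G, and let A be a subset of the vertices of H. Define G* to be the graph obtained as the disjoint union of G and H together with all edges between vertices of A and vertices of G. Let k < ℓ be natural numbers. If (a) H contains no ℓ-clique, (b) A contains an (ℓ−k)-clique of H, and (c) A contains no (ℓ−k+1)-clique of H, then G contains a k-clique if and only if G* contains an ℓ-clique. -/
open SimpleGraph

/-- The global gadget construction: disjoint union of `G` and the gadget graph `H`,
together with all edges between the distinguished set `A ⊆ V(H)` and the vertices of `G`. -/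
def globalGadget {V W : Type*} (G : SimpleGraph V) (H : SimpleGraph W) (A : Set W) :
    SimpleGraph (V ⊕ W) where
  Adj x y :=
    (∃ u v, x = Sum.inl u ∧ y = Sum.inl v ∧ G.Adj u v) ∨
    (∃ a b, x = Sum.inr a ∧ y = Sum.inr b ∧ H.Adj a b) ∨
    (∃ u a, a ∈ A ∧ ((x = Sum.inl u ∧ y = Sum.inr a) ∨ (x = Sum.inr a ∧ y = Sum.inl u)))
  symm := by
    constructor
    rintro x y (⟨u, v, rfl, rfl, h⟩ | ⟨a, b, rfl, rfl, h⟩ | ⟨u, a, ha, ⟨rfl, rfl⟩ | ⟨rfl, rfl⟩⟩)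
    · exact Or.inl ⟨v, u, rfl, rfl, h.symm⟩
    · exact Or.inr (Or.inl ⟨b, a, rfl, rfl, h.symm⟩)
    · exact Or.inr (Or.inr ⟨u, a, ha, Or.inr ⟨rfl, rfl⟩⟩)
    · exact Or.inr (Or.inr ⟨u, a, ha, Or.inl ⟨rfl, rfl⟩⟩)
  loopless := by
    constructor
    rintro x (⟨u, v, rfl, h, h'⟩ | ⟨a, b, rfl, h, h'⟩ | ⟨u, a, ha, ⟨rfl, h⟩ | ⟨rfl, h⟩⟩)
    · cases h; exact h'.ne rfl
    · cases h; exact h'.ne rfl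
    · exact Sum.inl_ne_inr h
    · exact Sum.inr_ne_inl h

theorem stmt_0 {V W : Type*} (G : SimpleGraph V) (H : SimpleGraph W) (A : Set W)
    (k ℓ : ℕ) (hkl : k < ℓ)
    (ha : ∀ t : Finset W, ¬ H.IsNClique ℓ t)
    (hb : ∃ t : Finset W, ↑t ⊆ A ∧ H.IsNClique (ℓ - k) t)
    (hc : ∀ t : Finset W, ↑t ⊆ A → ¬ H.IsNClique (ℓ - k + 1) t) :
    (∃ s : Finset V, G.IsNClique k s) ↔
      ∃ t : Finset (V ⊕ W), (globalGadget G H A).IsNClique ℓ t := by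
  constructor
  · rintro ⟨s, hs⟩
    obtain ⟨u, huA, hu⟩ := hb
    refine ⟨s.disjSum u, ?_, ?_⟩
    · rintro x hx y hy hxy
      simp only [Finset.mem_coe, Finset.mem_disjSum] at hx hy
      obtain ⟨a, has, rfl⟩ | ⟨a, hau, rfl⟩ := hx <;>
        obtain ⟨b, hbs, rfl⟩ | ⟨b, hbu, rfl⟩ := hy
      · exact Or.inl ⟨a, b, rfl, rfl, hs.1 has hbs (by simpa using hxy)⟩
      · exact Or.inr (Or.inr ⟨a, b, huA hbu, Or.inl ⟨rfl, rfl⟩⟩)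
      · exact Or.inr (Or.inr ⟨b, a, huA hau, Or.inr ⟨rfl, rfl⟩⟩)
      · exact Or.inr (Or.inl ⟨a, b, rfl, rfl, hu.1 hau hbu (by simpa using hxy)⟩)
    · rw [Finset.card_disjSum, hs.2, hu.2]
      omega
  · rintro ⟨t, ht⟩
    have hl : t.toLeft.card + t.toRight.card = ℓ := by
      rw [Finset.card_toLeft_add_card_toRight, ht.2]
    -- right part is a clique in H
    have hrc : H.IsClique t.toRight := by
      intro a hA b hB hab
      have := ht.1 (by simpa using hA) (by simpa using hB)
        (fun h => hab (Sum.inr_injective h))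
      rcases this with ⟨u, v, h, _⟩ | ⟨a', b', h1, h2, h3⟩ | ⟨u, a', _, ⟨h, _⟩ | ⟨_, h⟩⟩
      · exact absurd h (Sum.inr_ne_inl h).elim
      · cases h1; cases h2; exact h3
      · exact absurd h (by simp)
      · exact absurd h (by simp)
    -- left part nonempty
    have hlne : t.toLeft.Nonempty := by
      by_contra hne
      rw [Finset.not_nonempty_iff_eq_empty] at hne
      rw [hne, Finset.card_empty, zero_add] at hl
      exact ha t.toRight ⟨hrc, hl⟩
    obtain ⟨v0, hv0⟩ := hlne
    -- right part ⊆ A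
    have hrA : ↑t.toRight ⊆ A := by
      intro a haR
      have := ht.1 (by simpa using hv0) (by simpa using haR) (by simp)
      rcases this with ⟨u, v, _, h, _⟩ | ⟨a', b', h, _⟩ | ⟨u, a', hA', ⟨h1, h2⟩ | ⟨h1, _⟩⟩
      · exact absurd h (by simp)
      · exact absurd h (by simp)
      · cases Sum.inr_injective h2; exact hA'
      · exact absurd h1 (by simp)
    -- right part card ≤ ℓ - k
    have hrcard : t.toRight.card ≤ ℓ - k := by
      by_contra hgt
      push_neg at hgt
      obtain ⟨u, huR, hucard⟩ := Finset.exists_subset_card_eq (s := t.toRight) (n := ℓ - k + 1) hgt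
      exact hc u (fun x hx => hrA (huR hx)) ⟨hrc.subset huR, hucard⟩
    have hk : k ≤ t.toLeft.card := by omega
    obtain ⟨s, hsL, hscard⟩ := Finset.exists_subset_card_eq (s := t.toLeft) (n := k) hk
    refine ⟨s, fun a hA b hB hab => ?_, hscard⟩
    have := ht.1 (by simpa using hsL (by exact_mod_cast hA))
      (by simpa using hsL (by exact_mod_cast hB)) (fun h => hab (Sum.inl_injective h))
    rcases this with ⟨u, v, h1, h2, h3⟩ | ⟨a', b', h, _⟩ | ⟨u, a', _, ⟨_, h⟩ | ⟨h, _⟩⟩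
    · cases Sum.inl_injective h1; cases Sum.inl_injective h2; exact h3
    · exact absurd h (by simp)
    · exact absurd h (by simp)
    · exact absurd h (by simp)
end

section
/- Let H be a graph with two distinguished distinct vertices c and d, and suppose {c} and {d} are each feedback vertex sets of H (removing c, respectively d, makes H acyclic), while the empty set is not a feedback vertex set of H (H contains a cycle). For a graph G, let G* be obtained by replacing each edge (u,v) of G with a fresh copy of H, identifying u with c and v with d. Then for every k, G has a vertex cover of size at most k if and only if G* has a feedback vertex set of size at most k. -/
open SimpleGraph

/-- A vertex cover: a set of vertices meeting every edge. -/
def IsVertexCover {V : Type*} (G : SimpleGraph V) (U : Set V) : Prop :=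
  ∀ ⦃u v⦄, G.Adj u v → u ∈ U ∨ v ∈ U

/-- A feedback vertex set: a set of vertices whose removal leaves an acyclic graph. -/
def IsFVS {V : Type*} (G : SimpleGraph V) (U : Set V) : Prop :=
  (G.induce Uᶜ).IsAcyclic

/-- The vertex type of the edge-gadget image of `G`: the original vertices plus, for each
(oriented) edge of `G`, a fresh copy of the interior of the gadget graph `H`. -/
def EGVert {V W : Type*} [LinearOrder V] (G : SimpleGraph V) (c d : W) : Type _ :=
  V ⊕ ({p : V × V // G.Adj p.1 p.2 ∧ p.1 < p.2} × {w : W // w ≠ c ∧ w ≠ d})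

/-- Base adjacency relation for the edge-gadget construction: each edge `(u,v)` of `G`
(with `u < v`) is replaced by a fresh copy of `H`, identifying `u` with `c` and `v` with `d`. -/
def egBase {V W : Type*} [LinearOrder V] (G : SimpleGraph V) (H : SimpleGraph W) (c d : W)
    (x y : EGVert G c d) : Prop :=
  (∃ e : {p : V × V // G.Adj p.1 p.2 ∧ p.1 < p.2},
      x = Sum.inl e.1.1 ∧ y = Sum.inl e.1.2 ∧ H.Adj c d) ∨
  (∃ (e : {p : V × V // G.Adj p.1 p.2 ∧ p.1 < p.2}) (w : {w : W // w ≠ c ∧ w ≠ d}),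
      x = Sum.inl e.1.1 ∧ y = Sum.inr (e, w) ∧ H.Adj c w.1) ∨
  (∃ (e : {p : V × V // G.Adj p.1 p.2 ∧ p.1 < p.2}) (w : {w : W // w ≠ c ∧ w ≠ d}),
      x = Sum.inl e.1.2 ∧ y = Sum.inr (e, w) ∧ H.Adj d w.1) ∨
  (∃ (e : {p : V × V // G.Adj p.1 p.2 ∧ p.1 < p.2}) (w w' : {w : W // w ≠ c ∧ w ≠ d}),
      x = Sum.inr (e, w) ∧ y = Sum.inr (e, w') ∧ H.Adj w.1 w'.1)

/-- The edge-gadget image of `G`: every edge of `G` is replaced by a disjoint copy of `H`,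
identifying the endpoints with the distinguished vertices `c` and `d` of `H`. -/
def edgeGadget {V W : Type*} [LinearOrder V] (G : SimpleGraph V) (H : SimpleGraph W)
    (c d : W) : SimpleGraph (EGVert G c d) where
  Adj x y := egBase G H c d x y ∨ egBase G H c d y x
  symm := ⟨fun x y h => Or.symm h⟩
  loopless := by
    refine ⟨fun x h => ?_⟩
    have : egBase G H c d x x := by rcases h with h | h <;> exact h
    rcases this with ⟨e, h1, h2, _⟩ | ⟨e, w, h1, h2, _⟩ | ⟨e, w, h1, h2, _⟩
      | ⟨e, w, w', h1, h2, hadj⟩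
    · rw [h1] at h2
      exact absurd (Sum.inl_injective h2) (ne_of_lt e.2.2)
    · rw [h1] at h2; exact Sum.inl_ne_inr h2
    · rw [h1] at h2; exact Sum.inl_ne_inr h2
    · rw [h1] at h2
      obtain ⟨-, h⟩ := Prod.mk.injEq _ _ _ _ ▸ Sum.inr_injective h2
      exact H.loopless.irrefl _ (by rwa [h] at hadj)

namespace EGHelp

variable {α β : Type*} {G : SimpleGraph α} {G' : SimpleGraph β}

lemma map_isCycle_of_injOn (f : G →g G') {v : α} {p : G.Walk v v} (hp : p.IsCycle)
    (hf : ∀ a ∈ p.support, ∀ b ∈ p.support, f a = f b → a = b) : (p.map f).IsCycle := by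
  rw [Walk.isCycle_def] at hp ⊢
  obtain ⟨ht, hn, hs⟩ := hp
  refine ⟨⟨?_⟩, ?_, ?_⟩
  · rw [Walk.edges_map]
    refine List.Nodup.map_on ?_ ht.edges_nodup
    intro e1 he1 e2 he2 heq
    induction e1 using Sym2.ind with | _ a b =>
    induction e2 using Sym2.ind with | _ a' b' =>
    simp only [Sym2.map_pair_eq, Sym2.eq_iff] at heq ⊢
    have ha := p.fst_mem_support_of_mem_edges he1
    have hb := p.snd_mem_support_of_mem_edges he1
    have ha' := p.fst_mem_support_of_mem_edges he2
    have hb' := p.snd_mem_support_of_mem_edges he2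
    rcases heq with ⟨h1, h2⟩ | ⟨h1, h2⟩
    · exact Or.inl ⟨hf _ ha _ ha' h1, hf _ hb _ hb' h2⟩
    · exact Or.inr ⟨hf _ ha _ hb' h1, hf _ hb _ ha' h2⟩
  · rw [Ne, Walk.map_eq_nil_iff]; exact hn
  · rw [Walk.support_map, ← List.map_tail]
    refine List.Nodup.map_on ?_ hs
    intro a ha b hb
    exact hf a (List.mem_of_mem_tail ha) b (List.mem_of_mem_tail hb)

lemma exists_crossing {S : Set α} : ∀ {s t : α} (w : G.Walk s t), s ∈ S → t ∉ S →
    ∃ a b, G.Adj a b ∧ a ∈ S ∧ b ∉ S ∧ a ∈ w.support := by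
  intro s t w
  induction w with
  | nil => intro hs ht; exact absurd hs ht
  | @cons u m t h w ih =>
    intro hs ht
    by_cases hm : m ∈ S
    · obtain ⟨a, b, hab, haS, hbS, hmem⟩ := ih hm ht
      exact ⟨a, b, hab, haS, hbS, List.mem_cons_of_mem _ hmem⟩
    · exact ⟨u, m, h, hs, hm, by simp⟩

lemma cycle_support_subset {S : Set α} {x₀ : α}
    (hnb : ∀ y, G.Adj x₀ y → y ∈ S) (hx₀S : x₀ ∈ S)
    (huniq : ∀ ⦃x y x' y'⦄, G.Adj x y → x ∈ S → y ∉ S → G.Adj x' y' → x' ∈ S → y' ∉ S → x = x')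
    {p : G.Walk x₀ x₀} (hp : p.IsCycle) : ∀ z ∈ p.support, z ∈ S := by
  classical
  by_contra hcon
  push_neg at hcon
  obtain ⟨z, hz, hzS⟩ := hcon
  obtain ⟨a, b, hab, haS, hbS, haq⟩ := exists_crossing (p.takeUntil z hz) hx₀S hzS
  obtain ⟨a', b', hab', haS', hbS', har'⟩ :=
    exists_crossing (p.dropUntil z hz).reverse hx₀S hzS
  have haa' : a = a' := huniq hab haS hbS hab' haS' hbS'
  rw [Walk.support_reverse, List.mem_reverse, ← haa'] at har'
  have hax₀ : a ≠ x₀ := fun h => hbS (hnb b (h ▸ hab))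
  have haz : a ≠ z := fun h => hzS (h ▸ haS)
  have h1 : a ∈ (p.takeUntil z hz).support.tail := by
    rw [Walk.support_eq_cons (p.takeUntil z hz)] at haq
    exact (List.mem_cons.mp haq).resolve_left hax₀
  have h2 : a ∈ (p.dropUntil z hz).support.tail := by
    rw [Walk.support_eq_cons (p.dropUntil z hz)] at har'
    exact (List.mem_cons.mp har').resolve_left haz
  have hsplit : p.support.tail =
      (p.takeUntil z hz).support.tail ++ (p.dropUntil z hz).support.tail := by
    have h3 := congrArg (List.tail ∘ Walk.support) (p.take_spec hz)
    simp only [Function.comp_apply, Walk.support_append] at h3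
    rw [Walk.support_eq_cons (p.takeUntil z hz), List.cons_append, List.tail_cons] at h3
    exact h3.symm
  have hnd := hp.support_nodup
  rw [hsplit] at hnd
  exact (List.nodup_append'.mp hnd).2.2 h1 h2


variable {V W : Type*} [LinearOrder V] {G : SimpleGraph V} {H : SimpleGraph W} {c d : W}

lemma inr_eq {e1 e2 : {p : V × V // G.Adj p.1 p.2 ∧ p.1 < p.2}}
    {w1 w2 : {w : W // w ≠ c ∧ w ≠ d}}
    (h : (Sum.inr (e1, w1) : EGVert G c d) = Sum.inr (e2, w2)) : e1 = e2 ∧ w1 = w2 := by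
  have := Sum.inr_injective h
  exact ⟨congrArg Prod.fst this, congrArg Prod.snd this⟩

/-- L5 : every edge either joins the two endpoints of a `G`-edge, or has an interior endpoint. -/
lemma adj_cases {x y : EGVert G c d} (h : (edgeGadget G H c d).Adj x y) :
    (∃ e : {p : V × V // G.Adj p.1 p.2 ∧ p.1 < p.2},
      (x = Sum.inl e.1.1 ∧ y = Sum.inl e.1.2) ∨ (y = Sum.inl e.1.1 ∧ x = Sum.inl e.1.2)) ∨
    (∃ e w, x = Sum.inr (e, w)) ∨ (∃ e w, y = Sum.inr (e, w)) := by
  rcases h with h | h <;>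
    rcases h with ⟨e, h1, h2, _⟩ | ⟨e, w, h1, h2, _⟩ | ⟨e, w, h1, h2, _⟩ | ⟨e, w, w', h1, h2, _⟩
  · exact Or.inl ⟨e, Or.inl ⟨h1, h2⟩⟩
  · exact Or.inr (Or.inr ⟨e, w, h2⟩)
  · exact Or.inr (Or.inr ⟨e, w, h2⟩)
  · exact Or.inr (Or.inl ⟨e, w, h1⟩)
  · exact Or.inl ⟨e, Or.inr ⟨h1, h2⟩⟩
  · exact Or.inr (Or.inl ⟨e, w, h2⟩)
  · exact Or.inr (Or.inl ⟨e, w, h2⟩)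
  · exact Or.inr (Or.inr ⟨e, w, h1⟩)

/-- L1 : an `inl`–`inl` edge comes from a `G`-edge. -/
lemma adj_inl_inl {x y : V} (h : (edgeGadget G H c d).Adj (Sum.inl x : EGVert G c d) (Sum.inl y)) :
    G.Adj x y := by
  rcases h with h | h <;>
    rcases h with ⟨e, h1, h2, _⟩ | ⟨e, w, h1, h2, _⟩ | ⟨e, w, h1, h2, _⟩ | ⟨e, w, w', h1, h2, _⟩
  · rw [Sum.inl_injective h1, Sum.inl_injective h2]; exact e.2.1
  · exact absurd h2 (Sum.inl_ne_inr)
  · exact absurd h2 (Sum.inl_ne_inr)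
  · exact absurd h1 (Sum.inl_ne_inr)
  · rw [Sum.inl_injective h1, Sum.inl_injective h2]; exact e.2.1.symm
  · exact absurd h2 (Sum.inl_ne_inr)
  · exact absurd h2 (Sum.inl_ne_inr)
  · exact absurd h1 (Sum.inl_ne_inr)

/-- L4 : neighbours of an interior vertex of the `e`-copy stay in the `e`-copy. -/
lemma adj_inr {e : {p : V × V // G.Adj p.1 p.2 ∧ p.1 < p.2}} {w : {w : W // w ≠ c ∧ w ≠ d}}
    {y : EGVert G c d} (h : (edgeGadget G H c d).Adj (Sum.inr (e, w)) y) :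
    y = Sum.inl e.1.1 ∨ y = Sum.inl e.1.2 ∨ ∃ w', y = Sum.inr (e, w') := by
  rcases h with h | h <;>
    rcases h with ⟨e', h1, h2, _⟩ | ⟨e', w', h1, h2, _⟩ | ⟨e', w', h1, h2, _⟩
      | ⟨e', w1, w2, h1, h2, _⟩
  · exact absurd h1.symm Sum.inl_ne_inr
  · exact absurd h1.symm Sum.inl_ne_inr
  · exact absurd h1.symm Sum.inl_ne_inr
  · obtain ⟨he, -⟩ := inr_eq h1.symm; exact Or.inr (Or.inr ⟨w2, by rw [h2, he]⟩)
  · exact absurd h2 Sum.inr_ne_inl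
  · obtain ⟨he, -⟩ := inr_eq h2; exact Or.inl (by rw [h1, he])
  · obtain ⟨he, -⟩ := inr_eq h2; exact Or.inr (Or.inl (by rw [h1, he]))
  · obtain ⟨he, -⟩ := inr_eq h2; exact Or.inr (Or.inr ⟨w1, by rw [h1, he]⟩)

/-- L2 : an `inl`–`inr` edge. -/
lemma adj_inl_inr {x : V} {e : {p : V × V // G.Adj p.1 p.2 ∧ p.1 < p.2}}
    {w : {w : W // w ≠ c ∧ w ≠ d}}
    (h : (edgeGadget G H c d).Adj (Sum.inl x : EGVert G c d) (Sum.inr (e, w))) :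
    (x = e.1.1 ∧ H.Adj c w.1) ∨ (x = e.1.2 ∧ H.Adj d w.1) := by
  rcases h with h | h <;>
    rcases h with ⟨e', h1, h2, hA⟩ | ⟨e', w', h1, h2, hA⟩ | ⟨e', w', h1, h2, hA⟩
      | ⟨e', w1, w2, h1, h2, hA⟩
  · exact absurd h2.symm Sum.inl_ne_inr
  · obtain ⟨he, hw⟩ := inr_eq h2
    exact Or.inl ⟨Sum.inl_injective (he ▸ h1), hw ▸ hA⟩
  · obtain ⟨he, hw⟩ := inr_eq h2
    exact Or.inr ⟨Sum.inl_injective (he ▸ h1), hw ▸ hA⟩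
  · exact absurd h1.symm Sum.inr_ne_inl
  · exact absurd h1 Sum.inr_ne_inl
  · exact absurd h1 Sum.inr_ne_inl
  · exact absurd h1 Sum.inr_ne_inl
  · exact absurd h2 Sum.inl_ne_inr

/-- L3 : an `inr`–`inr` edge. -/
lemma adj_inr_inr {e1 e2 : {p : V × V // G.Adj p.1 p.2 ∧ p.1 < p.2}}
    {w1 w2 : {w : W // w ≠ c ∧ w ≠ d}}
    (h : (edgeGadget G H c d).Adj (Sum.inr (e1, w1) : EGVert G c d) (Sum.inr (e2, w2))) :
    e1 = e2 ∧ H.Adj w1.1 w2.1 := by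
  rcases h with h | h <;>
    rcases h with ⟨e', h1, h2, hA⟩ | ⟨e', w', h1, h2, hA⟩ | ⟨e', w', h1, h2, hA⟩
      | ⟨e', u1, u2, h1, h2, hA⟩
  · exact absurd h1.symm Sum.inl_ne_inr
  · exact absurd h1.symm Sum.inl_ne_inr
  · exact absurd h1.symm Sum.inl_ne_inr
  · obtain ⟨he, hw⟩ := inr_eq h1
    obtain ⟨he', hw'⟩ := inr_eq h2
    exact ⟨he.trans he'.symm, by rw [← hw, ← hw'] at hA; exact hA⟩
  · exact absurd h1.symm Sum.inl_ne_inr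
  · exact absurd h1.symm Sum.inl_ne_inr
  · exact absurd h1.symm Sum.inl_ne_inr
  · obtain ⟨he, hw⟩ := inr_eq h1
    obtain ⟨he', hw'⟩ := inr_eq h2
    exact ⟨he'.trans he.symm, (by rw [← hw, ← hw'] at hA; exact hA.symm)⟩

lemma forward_aux {V W : Type*} [LinearOrder V] (G : SimpleGraph V) (H : SimpleGraph W)
    (c d : W) (hcd : c ≠ d) (hc : IsFVS H {c}) (hd : IsFVS H {d})
    (U : Finset V) (hcover : _root_.IsVertexCover G ↑U)
    (R : Set (EGVert G c d)) (hRU : ∀ x : V, Sum.inl x ∈ R → x ∉ U) :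
    ((edgeGadget G H c d).induce R).IsAcyclic := by
  classical
  intro v₀ p hp
  have hnotU : ∀ (z : ↥R) (x : V), z.1 = Sum.inl x → x ∉ U := fun z x h => hRU x (h ▸ z.2)
  have hnn : ¬p.Nil := hp.not_nil
  have h3 : 3 ≤ p.length := hp.three_le_length
  obtain ⟨x₀, hx₀p, e, w₀, hx₀⟩ :
      ∃ x₀, x₀ ∈ p.support ∧ ∃ e w, x₀.1 = Sum.inr (e, w) := by
    have hadj1 := p.adj_snd hnn
    have hmem1 : p.getVert 1 ∈ p.support :=
      Walk.mem_support_iff_exists_getVert.mpr ⟨1, rfl, by omega⟩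
    have hadj1' : (edgeGadget G H c d).Adj v₀.1 (p.getVert 1).1 := hadj1
    rcases adj_cases hadj1' with ⟨e, hcase⟩ | ⟨e, w, hcase⟩ | ⟨e, w, hcase⟩
    · exfalso
      rcases hcase with ⟨h1, h2⟩ | ⟨h1, h2⟩
      · rcases hcover e.2.1 with h | h
        · exact hnotU v₀ _ h1 h
        · exact hnotU _ _ h2 h
      · rcases hcover e.2.1 with h | h
        · exact hnotU _ _ h1 h
        · exact hnotU v₀ _ h2 h
    · exact ⟨v₀, p.start_mem_support, e, w, hcase⟩
    · exact ⟨p.getVert 1, hmem1, e, w, hcase⟩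
  set p' := p.rotate x₀ hx₀p with hp'def
  have hp' : p'.IsCycle := hp.rotate hx₀p
  set S : Set ↥R :=
    {z | z.1 = Sum.inl e.1.1 ∨ z.1 = Sum.inl e.1.2 ∨ ∃ w, z.1 = Sum.inr (e, w)} with hSdef
  have hB : ∀ (a b : ↥R), (∃ w, a.1 = Sum.inr (e, w)) → ((edgeGadget G H c d).induce R).Adj a b → b ∈ S := by
    rintro a b ⟨w, haw⟩ hab
    have h2 : (edgeGadget G H c d).Adj a.1 b.1 := hab
    rw [haw] at h2
    rcases adj_inr h2 with h | h | ⟨w', h⟩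
    · exact Or.inl h
    · exact Or.inr (Or.inl h)
    · exact Or.inr (Or.inr ⟨w', h⟩)
  have hx₀S : x₀ ∈ S := Or.inr (Or.inr ⟨w₀, hx₀⟩)
  have hnb : ∀ y, ((edgeGadget G H c d).induce R).Adj x₀ y → y ∈ S := fun y hy => hB x₀ y ⟨w₀, hx₀⟩ hy
  have hcross : ∀ ⦃x y : ↥R⦄, ((edgeGadget G H c d).induce R).Adj x y → x ∈ S → y ∉ S →
      x.1 = Sum.inl e.1.1 ∨ x.1 = Sum.inl e.1.2 := by
    intro x y hxy hxS hyS
    rcases hxS with h | h | h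
    · exact Or.inl h
    · exact Or.inr h
    · exact absurd (hB x y h hxy) hyS
  have huniq : ∀ ⦃x y x' y' : ↥R⦄, ((edgeGadget G H c d).induce R).Adj x y → x ∈ S → y ∉ S →
      ((edgeGadget G H c d).induce R).Adj x' y' → x' ∈ S → y' ∉ S → x = x' := by
    intro x y x' y' h1 h2 h3 h4 h5 h6
    rcases hcover e.2.1 with hU | hU
    · have hx := (hcross h1 h2 h3).resolve_left (fun hh => hnotU x _ hh hU)
      have hx' := (hcross h4 h5 h6).resolve_left (fun hh => hnotU x' _ hh hU)
      exact Subtype.ext (hx.trans hx'.symm)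
    · have hx := (hcross h1 h2 h3).resolve_right (fun hh => hnotU x _ hh hU)
      have hx' := (hcross h4 h5 h6).resolve_right (fun hh => hnotU x' _ hh hU)
      exact Subtype.ext (hx.trans hx'.symm)
  have hsupp : ∀ z ∈ p'.support, z ∈ S := cycle_support_subset hnb hx₀S huniq hp'
  let J : SimpleGraph ↥R :=
    { Adj := fun a b => ((edgeGadget G H c d).induce R).Adj a b ∧ a ∈ S ∧ b ∈ S
      symm := ⟨fun a b h => ⟨h.1.symm, h.2.2, h.2.1⟩⟩
      loopless := ⟨fun a h => ((edgeGadget G H c d).induce R).loopless.irrefl a h.1⟩ }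
  have hedges : ∀ e' ∈ p'.edges, e' ∈ J.edgeSet := by
    intro e' he'
    induction e' using Sym2.ind with | _ a b =>
    exact ⟨p'.adj_of_mem_edges he', hsupp _ (p'.fst_mem_support_of_mem_edges he'),
      hsupp _ (p'.snd_mem_support_of_mem_edges he')⟩
  have hq : (p'.transfer J hedges).IsCycle := hp'.transfer hedges
  have hqsupp : ∀ z ∈ (p'.transfer J hedges).support, z ∈ S := by
    rw [Walk.support_transfer]; exact hsupp
  rcases hcover e.2.1 with hU | hU
  · -- `e.1.1 ∈ U` : map the cycle into `H - c`
    have hshape : ∀ z : ↥R, z ∈ S → z.1 = Sum.inl e.1.2 ∨ ∃ w, z.1 = Sum.inr (e, w) := by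
      intro z hz
      rcases hz with h | h | h
      · exact absurd hU (hnotU z _ h)
      · exact Or.inl h
      · exact Or.inr h
    let f : ↥R → ↥({c}ᶜ : Set W) := fun z =>
      Sum.elim (fun _ => ⟨d, Set.mem_compl_singleton_iff.mpr (Ne.symm hcd)⟩)
        (fun q => ⟨q.2.1, Set.mem_compl_singleton_iff.mpr q.2.2.1⟩) z.1
    have hfl : ∀ (z : ↥R) (x : V), z.1 = Sum.inl x → (f z).1 = d := by
      intro z x hz; simp only [f, hz, Sum.elim_inl]
    have hfr : ∀ (z : ↥R) (e' : _) (w : _), z.1 = Sum.inr (e', w) → (f z).1 = w.1 := by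
      intro z e' w hz; simp only [f, hz, Sum.elim_inr]
    have hmap : ∀ a b : ↥R, J.Adj a b → H.Adj (f a).1 (f b).1 := by
      intro a b hJ
      obtain ⟨hab, haS, hbS⟩ := hJ
      have hEG : (edgeGadget G H c d).Adj a.1 b.1 := hab
      rcases hshape a haS with ha | ⟨w1, ha⟩ <;> rcases hshape b hbS with hb | ⟨w2, hb⟩
      · exact absurd (Subtype.ext (ha.trans hb.symm)) hab.ne
      · rw [hfl a _ ha, hfr b _ _ hb]
        rw [ha, hb] at hEG
        rcases adj_inl_inr hEG with ⟨h1, -⟩ | ⟨-, h2⟩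
        · exact absurd h1 (ne_of_lt e.2.2).symm
        · exact h2
      · rw [hfr a _ _ ha, hfl b _ hb]
        rw [ha, hb] at hEG
        rcases adj_inl_inr hEG.symm with ⟨h1, -⟩ | ⟨-, h2⟩
        · exact absurd h1 (ne_of_lt e.2.2).symm
        · exact h2.symm
      · rw [hfr a _ _ ha, hfr b _ _ hb]
        rw [ha, hb] at hEG
        exact (adj_inr_inr hEG).2
    let ψ : J →g H.induce ({c}ᶜ : Set W) := ⟨f, fun {a b} hJ => hmap a b hJ⟩
    have hinj : ∀ a ∈ (p'.transfer J hedges).support, ∀ b ∈ (p'.transfer J hedges).support,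
        ψ a = ψ b → a = b := by
      intro a ha b hb habeq
      have haS := hqsupp a ha
      have hbS := hqsupp b hb
      have h1 : (f a).1 = (f b).1 := congrArg Subtype.val habeq
      rcases hshape a haS with ha' | ⟨w1, ha'⟩ <;> rcases hshape b hbS with hb' | ⟨w2, hb'⟩
      · exact Subtype.ext (ha'.trans hb'.symm)
      · rw [hfl a _ ha', hfr b _ _ hb'] at h1
        exact absurd h1.symm w2.2.2
      · rw [hfr a _ _ ha', hfl b _ hb'] at h1
        exact absurd h1 w1.2.2
      · rw [hfr a _ _ ha', hfr b _ _ hb'] at h1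
        have hw : w1 = w2 := Subtype.ext h1
        exact Subtype.ext (ha'.trans (show Sum.inr (e, w1) = b.1 by rw [hw]; exact hb'.symm))
    exact hc _ (map_isCycle_of_injOn ψ hq hinj)
  · -- `e.1.2 ∈ U` : map the cycle into `H - d`
    have hshape : ∀ z : ↥R, z ∈ S → z.1 = Sum.inl e.1.1 ∨ ∃ w, z.1 = Sum.inr (e, w) := by
      intro z hz
      rcases hz with h | h | h
      · exact Or.inl h
      · exact absurd hU (hnotU z _ h)
      · exact Or.inr h
    let f : ↥R → ↥({d}ᶜ : Set W) := fun z =>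
      Sum.elim (fun _ => ⟨c, Set.mem_compl_singleton_iff.mpr hcd⟩)
        (fun q => ⟨q.2.1, Set.mem_compl_singleton_iff.mpr q.2.2.2⟩) z.1
    have hfl : ∀ (z : ↥R) (x : V), z.1 = Sum.inl x → (f z).1 = c := by
      intro z x hz; simp only [f, hz, Sum.elim_inl]
    have hfr : ∀ (z : ↥R) (e' : _) (w : _), z.1 = Sum.inr (e', w) → (f z).1 = w.1 := by
      intro z e' w hz; simp only [f, hz, Sum.elim_inr]
    have hmap : ∀ a b : ↥R, J.Adj a b → H.Adj (f a).1 (f b).1 := by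
      intro a b hJ
      obtain ⟨hab, haS, hbS⟩ := hJ
      have hEG : (edgeGadget G H c d).Adj a.1 b.1 := hab
      rcases hshape a haS with ha | ⟨w1, ha⟩ <;> rcases hshape b hbS with hb | ⟨w2, hb⟩
      · exact absurd (Subtype.ext (ha.trans hb.symm)) hab.ne
      · rw [hfl a _ ha, hfr b _ _ hb]
        rw [ha, hb] at hEG
        rcases adj_inl_inr hEG with ⟨-, h2⟩ | ⟨h1, -⟩
        · exact h2
        · exact absurd h1 (ne_of_lt e.2.2)
      · rw [hfr a _ _ ha, hfl b _ hb]
        rw [ha, hb] at hEG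
        rcases adj_inl_inr hEG.symm with ⟨-, h2⟩ | ⟨h1, -⟩
        · exact h2.symm
        · exact absurd h1 (ne_of_lt e.2.2)
      · rw [hfr a _ _ ha, hfr b _ _ hb]
        rw [ha, hb] at hEG
        exact (adj_inr_inr hEG).2
    let ψ : J →g H.induce ({d}ᶜ : Set W) := ⟨f, fun {a b} hJ => hmap a b hJ⟩
    have hinj : ∀ a ∈ (p'.transfer J hedges).support, ∀ b ∈ (p'.transfer J hedges).support,
        ψ a = ψ b → a = b := by
      intro a ha b hb habeq
      have haS := hqsupp a ha
      have hbS := hqsupp b hb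
      have h1 : (f a).1 = (f b).1 := congrArg Subtype.val habeq
      rcases hshape a haS with ha' | ⟨w1, ha'⟩ <;> rcases hshape b hbS with hb' | ⟨w2, hb'⟩
      · exact Subtype.ext (ha'.trans hb'.symm)
      · rw [hfl a _ ha', hfr b _ _ hb'] at h1
        exact absurd h1.symm w2.2.1
      · rw [hfr a _ _ ha', hfl b _ hb'] at h1
        exact absurd h1 w1.2.1
      · rw [hfr a _ _ ha', hfr b _ _ hb'] at h1
        have hw : w1 = w2 := Subtype.ext h1
        exact Subtype.ext (ha'.trans (show Sum.inr (e, w1) = b.1 by rw [hw]; exact hb'.symm))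
    exact hd _ (map_isCycle_of_injOn ψ hq hinj)

lemma backward {V W : Type*} [LinearOrder V] (G : SimpleGraph V) (H : SimpleGraph W)
    (c d : W) (hcd : c ≠ d) (hH : ¬ IsFVS H (∅ : Set W))
    (Us : Finset (EGVert G c d)) (hfvs : IsFVS (edgeGadget G H c d) ↑Us)
    [DecidableEq V] :
    _root_.IsVertexCover G ↑(Us.image (Sum.elim id (fun q => q.1.1.1) : EGVert G c d → V)) := by
  classical
  obtain ⟨v₁, qH, hqH⟩ : ∃ (v₁ : W) (qH : H.Walk v₁ v₁), qH.IsCycle := by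
    simp only [IsFVS, IsAcyclic, not_forall, not_not] at hH
    obtain ⟨v₁, q, hq⟩ := hH
    let ι : H.induce ((∅ : Set W)ᶜ) →g H := ⟨Subtype.val, fun {a b} h => h⟩
    exact ⟨v₁.1, q.map ι, map_isCycle_of_injOn ι hq (fun a _ b _ h => Subtype.ext h)⟩
  have main : ∀ u v : V, G.Adj u v → u < v →
      u ∈ (↑(Us.image (Sum.elim id (fun q => q.1.1.1) : EGVert G c d → V)) : Set V) ∨
      v ∈ (↑(Us.image (Sum.elim id (fun q => q.1.1.1) : EGVert G c d → V)) : Set V) := by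
    intro u v huv hlt
    by_contra hcon
    push_neg at hcon
    obtain ⟨hu, hv⟩ := hcon
    let e : {p : V × V // G.Adj p.1 p.2 ∧ p.1 < p.2} := ⟨(u, v), huv, hlt⟩
    have hmemf : ∀ z : EGVert G c d, z ∈ Us →
        ((Sum.elim id (fun q => q.1.1.1) : EGVert G c d → V) z)
          ∈ (↑(Us.image (Sum.elim id (fun q => q.1.1.1) : EGVert G c d → V)) : Set V) :=
      fun z hz => Finset.mem_coe.mpr (Finset.mem_image_of_mem _ hz)
    have hinlu : (Sum.inl u : EGVert G c d) ∈ (↑Us : Set (EGVert G c d))ᶜ :=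
      fun h => hu (hmemf _ h)
    have hinlv : (Sum.inl v : EGVert G c d) ∈ (↑Us : Set (EGVert G c d))ᶜ :=
      fun h => hv (hmemf _ h)
    have hint : ∀ w : {w : W // w ≠ c ∧ w ≠ d},
        (Sum.inr (e, w) : EGVert G c d) ∈ (↑Us : Set (EGVert G c d))ᶜ :=
      fun w h => hu (hmemf _ h)
    let φ : W → ↥((↑Us : Set (EGVert G c d))ᶜ) := fun w =>
      if h1 : w = c then ⟨Sum.inl u, hinlu⟩
      else if h2 : w = d then ⟨Sum.inl v, hinlv⟩
      else ⟨Sum.inr (e, ⟨w, h1, h2⟩), hint _⟩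
    have hφc : (φ c).1 = Sum.inl u := by simp [φ]; rfl
    have hφd : (φ d).1 = Sum.inl v := by simp [φ, Ne.symm hcd]; rfl
    have hφo : ∀ (w) (h1 : w ≠ c) (h2 : w ≠ d), (φ w).1 = Sum.inr (e, ⟨w, h1, h2⟩) := by
      intro w h1 h2; simp [φ, h1, h2]; rfl
    have hmap : ∀ a b : W, H.Adj a b → (edgeGadget G H c d).Adj (φ a).1 (φ b).1 := by
      intro a b hab
      have hne := hab.ne
      by_cases h1 : a = c
      · subst h1
        by_cases h3 : b = d
        · subst h3
          rw [hφc, hφd]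
          exact Or.inl (Or.inl ⟨e, rfl, rfl, hab⟩)
        · rw [hφc, hφo b (Ne.symm hne) h3]
          exact Or.inl (Or.inr (Or.inl ⟨e, ⟨b, Ne.symm hne, h3⟩, rfl, rfl, hab⟩))
      · by_cases h2 : a = d
        · subst h2
          by_cases h3 : b = c
          · subst h3
            rw [hφd, hφc]
            exact Or.inr (Or.inl ⟨e, rfl, rfl, hab.symm⟩)
          · rw [hφd, hφo b h3 (Ne.symm hne)]
            exact Or.inl (Or.inr (Or.inr (Or.inl ⟨e, ⟨b, h3, Ne.symm hne⟩, rfl, rfl, hab⟩)))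
        · by_cases h3 : b = c
          · subst h3
            rw [hφo a h1 h2, hφc]
            exact Or.inr (Or.inr (Or.inl ⟨e, ⟨a, h1, h2⟩, rfl, rfl, hab.symm⟩))
          · by_cases h4 : b = d
            · subst h4
              rw [hφo a h1 h2, hφd]
              exact Or.inr (Or.inr (Or.inr (Or.inl ⟨e, ⟨a, h1, h2⟩, rfl, rfl, hab.symm⟩)))
            · rw [hφo a h1 h2, hφo b h3 h4]
              exact Or.inl (Or.inr (Or.inr (Or.inr ⟨e, ⟨a, h1, h2⟩, ⟨b, h3, h4⟩, rfl, rfl, hab⟩)))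
    have hφinj : Function.Injective φ := by
      intro a b heq
      have h1 : (φ a).1 = (φ b).1 := congrArg Subtype.val heq
      by_cases ha1 : a = c
      · by_cases hb1 : b = c
        · rw [ha1, hb1]
        · by_cases hb2 : b = d
          · rw [ha1, hb2, hφc, hφd] at h1
            exact absurd (Sum.inl_injective h1) (ne_of_lt hlt)
          · rw [ha1, hφc, hφo b hb1 hb2] at h1
            exact absurd h1 Sum.inl_ne_inr
      · by_cases ha2 : a = d
        · by_cases hb1 : b = c
          · rw [ha2, hb1, hφd, hφc] at h1
            exact absurd (Sum.inl_injective h1) (ne_of_lt hlt).symm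
          · by_cases hb2 : b = d
            · rw [ha2, hb2]
            · rw [ha2, hφd, hφo b hb1 hb2] at h1
              exact absurd h1 Sum.inl_ne_inr
        · by_cases hb1 : b = c
          · rw [hb1, hφc, hφo a ha1 ha2] at h1
            exact absurd h1 Sum.inr_ne_inl
          · by_cases hb2 : b = d
            · rw [hb2, hφd, hφo a ha1 ha2] at h1
              exact absurd h1 Sum.inr_ne_inl
            · rw [hφo a ha1 ha2, hφo b hb1 hb2] at h1
              obtain ⟨-, hw⟩ := inr_eq h1
              exact congrArg Subtype.val hw
    let Φ : H →g (edgeGadget G H c d).induce ((↑Us : Set (EGVert G c d))ᶜ) :=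
      ⟨φ, fun {a b} h => hmap a b h⟩
    exact hfvs _ (map_isCycle_of_injOn Φ hqH (fun a _ b _ h => hφinj h))
  intro u v huv
  rcases lt_trichotomy u v with hlt | heq | hlt
  · exact main u v huv hlt
  · exact absurd heq huv.ne
  · exact (main v u huv.symm hlt).symm

end EGHelp

theorem stmt_2 {V W : Type*} [LinearOrder V] (G : SimpleGraph V) (H : SimpleGraph W)
    (c d : W) (hcd : c ≠ d)
    (hc : IsFVS H {c}) (hd : IsFVS H {d}) (hH : ¬ IsFVS H (∅ : Set W)) (k : ℕ) :
    (∃ U : Finset V, U.card ≤ k ∧ _root_.IsVertexCover G ↑U) ↔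
      (∃ U : Finset (EGVert G c d), U.card ≤ k ∧ IsFVS (edgeGadget G H c d) ↑U) := by
    classical
  constructor
  · rintro ⟨U, hcard, hcover⟩
    exact ⟨U.image Sum.inl, le_trans Finset.card_image_le hcard,
      EGHelp.forward_aux G H c d hcd hc hd U hcover _
        (fun x hx hxU => hx (Finset.mem_coe.mpr (Finset.mem_image_of_mem _ hxU)))⟩
  · rintro ⟨Us, hcard, hfvs⟩
    exact ⟨Us.image (Sum.elim id (fun q => q.1.1.1) : EGVert G c d → V),
      le_trans Finset.card_image_le hcard, EGHelp.backward G H c d hcd hH Us hfvs⟩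
end

section
/- The undirected graph G* on 9 vertices {1_u, 2_u, 3_u, 1_v, 2_v, 3_v, 1_w, 2_w, 3_w} in which each vertex 3_x (for x ∈ {u,v,w}) is adjacent exactly to {2_u, 2_v, 2_w}, each vertex 2_x is adjacent to all other 8 vertices, and each vertex 1_x is adjacent exactly to {2_u, 2_v, 2_w} ∪ ({1_u,1_v,1_w} \ {1_x}), has no Hamiltonian cycle. -/
open SimpleGraph

/-- A directed Hamiltonian cycle of the directed graph `R`: a cyclic enumeration of all
vertices following the edge directions. -/
def DirHamiltonian {V : Type*} [Fintype V] (R : V → V → Prop) : Prop :=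
  ∃ f : ZMod (Fintype.card V) ≃ V, ∀ i, R (f i) (f (i + 1))

/-- `f` enumerates an undirected Hamiltonian cycle of `G`. -/
def IsHamCycleFn {V : Type*} [Fintype V] (G : SimpleGraph V)
    (f : ZMod (Fintype.card V) ≃ V) : Prop :=
  ∀ i, G.Adj (f i) (f (i + 1))

/-- The undirected graph `G` has a Hamiltonian cycle. -/
def Hamiltonian {V : Type*} [Fintype V] (G : SimpleGraph V) : Prop :=
  ∃ f : ZMod (Fintype.card V) ≃ V, IsHamCycleFn G f

/-- Base (oriented) adjacency of the result of applying the node gadget with node graph `N`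
and cross-edges `C` to the directed graph `R`. -/
def nodeApplyBase {V : Type*} {m : ℕ} (N : SimpleGraph (Fin m)) (C : Fin m → Fin m → Prop)
    (R : V → V → Prop) (x y : V × Fin m) : Prop :=
  (x.1 = y.1 ∧ N.Adj x.2 y.2) ∨ (R x.1 y.1 ∧ C x.2 y.2)

/-- Applying a node-gadget reduction (node graph `N`, cross-edges `C`) to a directed graph
`R`: each vertex is replaced by a copy of `N`, and each directed edge `(u,v)` induces the
undirected edges `{i_u, j_v}` for every cross-edge `(i,j) ∈ C`. -/
def nodeApply {V : Type*} {m : ℕ} (N : SimpleGraph (Fin m)) (C : Fin m → Fin m → Prop)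
    (R : V → V → Prop) : SimpleGraph (V × Fin m) where
  Adj x y := x ≠ y ∧ (nodeApplyBase N C R x y ∨ nodeApplyBase N C R y x)
  symm := ⟨fun x y h => ⟨h.1.symm, h.2.symm⟩⟩
  loopless := ⟨fun x h => h.1 rfl⟩

/-- The node gadget itself, as a graph on two copies of `Fin m`: two copies of the node
graph `N` plus the cross-edges `C` between the first and the second copy. -/
def gadgetGraph {m : ℕ} (N : SimpleGraph (Fin m)) (C : Fin m → Fin m → Prop) :
    SimpleGraph (Fin m ⊕ Fin m) where
  Adj x y :=
    (∃ i j, N.Adj i j ∧ ((x = Sum.inl i ∧ y = Sum.inl j) ∨ (x = Sum.inr i ∧ y = Sum.inr j))) ∨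
    (∃ i j, C i j ∧ ((x = Sum.inl i ∧ y = Sum.inr j) ∨ (x = Sum.inr j ∧ y = Sum.inl i)))
  symm := by
    refine ⟨?_⟩
    rintro x y (⟨i, j, h, ⟨rfl, rfl⟩ | ⟨rfl, rfl⟩⟩ | ⟨i, j, h, ⟨rfl, rfl⟩ | ⟨rfl, rfl⟩⟩)
    · exact Or.inl ⟨j, i, h.symm, Or.inl ⟨rfl, rfl⟩⟩
    · exact Or.inl ⟨j, i, h.symm, Or.inr ⟨rfl, rfl⟩⟩
    · exact Or.inr ⟨i, j, h, Or.inr ⟨rfl, rfl⟩⟩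
    · exact Or.inr ⟨i, j, h, Or.inl ⟨rfl, rfl⟩⟩
  loopless := by
    refine ⟨?_⟩
    rintro x (⟨i, j, h, ⟨h1, h2⟩ | ⟨h1, h2⟩⟩ | ⟨i, j, h, ⟨h1, h2⟩ | ⟨h1, h2⟩⟩) <;>
      subst h1 <;> simp_all

/-- The standard node gadget for reducing directed to undirected Hamiltonian cycle:
the node graph is the path `in — mid — out` (`pathGraph 3`) and the only cross-edge goes
from `out` (index 2) to `in` (index 0). -/
def stdHCGadget {V : Type*} (R : V → V → Prop) : SimpleGraph (V × Fin 3) :=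
  nodeApply (pathGraph 3) (fun i j => i = 2 ∧ j = 0) R

/-- The 9-vertex graph of Statement 9: vertex `(x, i)` stands for `(i+1)_x`; the
`2`-vertices (i = 1) are adjacent to everything else, the `1`-vertices (i = 0) are
additionally adjacent to each other, and the `3`-vertices (i = 2) have no further edges. -/
def graph9 : SimpleGraph (Fin 3 × Fin 3) where
  Adj a b := a ≠ b ∧ (a.2 = 1 ∨ b.2 = 1 ∨ (a.2 = 0 ∧ b.2 = 0))
  symm := ⟨fun a b h => ⟨h.1.symm, by tauto⟩⟩
  loopless := ⟨fun a h => h.1 rfl⟩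


lemma stmt9_key (f : ZMod 9 ≃ Fin 3 × Fin 3)
    (hf : ∀ i, graph9.Adj (f i) (f (i + 1))) : False := by
  classical
  set S : Finset (ZMod 9) := Finset.univ.filter (fun i => (f i).2 = 2) with hS
  set T : Finset (ZMod 9) := Finset.univ.filter (fun i => (f i).2 = 1) with hT
  have hScard : S.card = 3 := by
    have : S = (Finset.univ.filter fun v : Fin 3 × Fin 3 => v.2 = 2).image f.symm := by
      ext i
      simp [hS, Equiv.eq_symm_apply, eq_comm]
    rw [this, Finset.card_image_of_injective _ f.symm.injective]
    decide
  have hTcard : T.card = 3 := by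
    have : T = (Finset.univ.filter fun v : Fin 3 × Fin 3 => v.2 = 1).image f.symm := by
      ext i
      simp [hT, Equiv.eq_symm_apply, eq_comm]
    rw [this, Finset.card_image_of_injective _ f.symm.injective]
    decide
  have h2 : ∀ i : ZMod 9, (f i).2 = 2 → (f (i + 1)).2 = 1 := by
    intro i hi
    obtain ⟨-, h | h | ⟨h, -⟩⟩ := hf i
    · rw [hi] at h; exact absurd h (by decide)
    · exact h
    · rw [hi] at h; exact absurd h (by decide)
  have h2' : ∀ i : ZMod 9, (f i).2 = 2 → (f (i - 1)).2 = 1 := by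
    intro i hi
    obtain ⟨-, h | h | ⟨-, h⟩⟩ := hf (i - 1)
    · exact h
    · rw [sub_add_cancel, hi] at h; exact absurd h (by decide)
    · rw [sub_add_cancel, hi] at h; exact absurd h (by decide)
  have hsub1 : S.image (· + 1) ⊆ T := by
    intro j hj
    obtain ⟨i, hi, rfl⟩ := Finset.mem_image.mp hj
    simp only [hS, Finset.mem_filter, Finset.mem_univ, true_and] at hi
    simp only [hT, Finset.mem_filter, Finset.mem_univ, true_and]
    exact h2 i hi
  have hsub2 : S.image (· - 1) ⊆ T := by
    intro j hj
    obtain ⟨i, hi, rfl⟩ := Finset.mem_image.mp hj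
    simp only [hS, Finset.mem_filter, Finset.mem_univ, true_and] at hi
    simp only [hT, Finset.mem_filter, Finset.mem_univ, true_and]
    exact h2' i hi
  have hc1 : (S.image (· + 1)).card = 3 := by
    rw [Finset.card_image_of_injective _ (add_left_injective 1)]; exact hScard
  have hc2 : (S.image (· - 1)).card = 3 := by
    rw [Finset.card_image_of_injective _ (sub_left_injective)]; exact hScard
  have heq1 : S.image (· + 1) = T :=
    Finset.eq_of_subset_of_card_le hsub1 (by rw [hc1, hTcard])
  have heq2 : S.image (· - 1) = T :=
    Finset.eq_of_subset_of_card_le hsub2 (by rw [hc2, hTcard])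
  have hstep : ∀ i ∈ S, i + 2 ∈ S := by
    intro i hi
    have : i + 1 ∈ T := heq1 ▸ Finset.mem_image_of_mem _ hi
    rw [← heq2] at this
    obtain ⟨j, hj, hj2⟩ := Finset.mem_image.mp this
    have : j = i + 2 := by
      have : j - 1 = i + 1 := hj2
      linear_combination this
    exact this ▸ hj
  obtain ⟨s, hs⟩ : S.Nonempty := Finset.card_pos.mp (by omega)
  have hiter : ∀ k : ℕ, s + 2 * k ∈ S := by
    intro k
    induction k with
    | zero => simpa using hs
    | succ n ih =>
        have := hstep _ ih
        have he : s + 2 * (n + 1 : ℕ) = s + 2 * n + 2 := by push_cast; ring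
        rw [he]; exact this
  have hall : ∀ t : ZMod 9, t ∈ S := by
    intro t
    have h5 : s + 2 * (((t - s) * 5).val : ℕ) = t := by
      rw [ZMod.natCast_val, ZMod.cast_id]
      calc s + 2 * ((t - s) * 5) = s + (t - s) * 10 := by ring
        _ = s + (t - s) * 1 := by rw [show (10 : ZMod 9) = 1 from rfl]
        _ = t := by ring
    exact h5 ▸ hiter _
  have : S = Finset.univ := Finset.eq_univ_iff_forall.mpr hall
  rw [this] at hScard
  simp at hScard

theorem stmt_9 : ¬ Hamiltonian graph9 := by
  rintro ⟨f, hf⟩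
  exact stmt9_key f hf
end
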